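/- Let ω = (ω₀, …, ω_{n+1}) be a primitive key sequence with n ≥ 1, ω₀ < ω₁, and α₁ ≥ 2, and set K := ω₀ + ω_{n+1} + 1 − Σ_{j=1}^{n} (α_j − 1)·ω_j. If K ≥ 1 and ω_{n+1} divides K, then K = ω_{n+1}, α₁ = 2, ω₁ = ω₀ + 1, α_j = 1 for all 2 ≤ j ≤ n, and (ω₀, ω₁) = (2, 3). -/

import Mathlib

/-- `dks ω k` is `gcd(|ω₀|, …, |ω_k|)`. -/
def dks (ω : ℕ → ℤ) (k : ℕ) : ℕ :=
  (Finset.range (k + 1)).gcd fun j => (ω j).natAbs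

/-- `alphaK ω k` is `α_k = d_{k−1}/d_k`. -/
def alphaK (ω : ℕ → ℤ) (k : ℕ) : ℕ := dks ω (k - 1) / dks ω k

/-- A key sequence `(ω₀, …, ω_{n+1})`. -/
def IsKeySequence (n : ℕ) (ω : ℕ → ℤ) : Prop :=
  1 ≤ ω 0 ∧ dks ω (n + 1) = 1 ∧
    ∀ k, 1 ≤ k → k ≤ n → ω (k + 1) < (alphaK ω k : ℤ) * ω k

/-- A key sequence is primitive iff `ω_{n+1} > 0`. -/
def IsPrimitive (n : ℕ) (ω : ℕ → ℤ) : Prop := 0 < ω (n + 1)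

lemma dks_pos (ω : ℕ → ℤ) (h : 1 ≤ ω 0) (k : ℕ) : 0 < dks ω k := by
  rw [Nat.pos_iff_ne_zero]
  intro h0
  have := Finset.gcd_eq_zero_iff.mp h0 0 (by simp)
  simp only [Int.natAbs_eq_zero] at this
  omega
lemma dks_dvd (ω : ℕ → ℤ) {j k : ℕ} (h : j ≤ k) : dks ω k ∣ dks ω j :=
  Finset.gcd_mono (by simpa using Nat.add_le_add_right h 1)
lemma alphaK_mul (ω : ℕ → ℤ) (hω0 : 1 ≤ ω 0) {k : ℕ} (hk : 1 ≤ k) :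
    alphaK ω k * dks ω k = dks ω (k - 1) :=
  Nat.div_mul_cancel (dks_dvd ω (by omega))
lemma alphaK_pos (ω : ℕ → ℤ) (hω0 : 1 ≤ ω 0) {k : ℕ} (hk : 1 ≤ k) :
    1 ≤ alphaK ω k := by
  have h1 := alphaK_mul ω hω0 hk
  have h2 := dks_pos ω hω0 (k - 1)
  have h3 := dks_pos ω hω0 k
  nlinarith


lemma omega_pos (n : ℕ) (ω : ℕ → ℤ) (hω : IsKeySequence n ω) (hprim : IsPrimitive n ω) :
    ∀ k, k ≤ n + 1 → 0 < ω k := by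
  obtain ⟨h0, -, hlt⟩ := hω
  have key : ∀ m, m ≤ n → 0 < ω (n + 1 - m) := by
    intro m
    induction m with
    | zero => intro _; simpa [IsPrimitive] using hprim
    | succ m ih =>
      intro hm
      have h1 : 0 < ω (n + 1 - m) := ih (by omega)
      set k := n - m with hk
      have hk1 : 1 ≤ k := by omega
      have hkn : k ≤ n := by omega
      have e1 : n + 1 - m = k + 1 := by omega
      have e2 : n + 1 - (m + 1) = k := by omega
      rw [e1] at h1
      rw [e2]
      have := hlt k hk1 hkn
      by_contra hc
      push_neg at hc
      have : (alphaK ω k : ℤ) * ω k ≤ 0 :=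
        mul_nonpos_of_nonneg_of_nonpos (by positivity) hc
      omega
  intro k hk
  rcases Nat.eq_or_lt_of_le hk with h | h
  · subst h; exact hprim
  rcases Nat.eq_zero_or_pos k with h' | h'
  · subst h'; omega
  · have := key (n + 1 - k) (by omega)
    rwa [show n + 1 - (n + 1 - k) = k by omega] at this


/-- For a primitive key sequence with `n ≥ 1`, `ω₀ < ω₁`, `α₁ ≥ 2`, and
`K := ω₀ + ω_{n+1} + 1 − Σ_{j=1}^{n} (α_j − 1)·ω_j`: if `K ≥ 1` and `ω_{n+1} ∣ K`,
then `K = ω_{n+1}`, `α₁ = 2`, `ω₁ = ω₀ + 1`, `α_j = 1` for `2 ≤ j ≤ n`, and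
`(ω₀, ω₁) = (2, 3)`. -/
theorem stmt9 (n : ℕ) (ω : ℕ → ℤ) (hω : IsKeySequence n ω) (hprim : IsPrimitive n ω)
    (hn : 1 ≤ n) (h01 : ω 0 < ω 1) (hα : 2 ≤ alphaK ω 1) (K : ℤ)
    (hK : K = ω 0 + ω (n + 1) + 1 - ∑ j ∈ Finset.Icc 1 n, ((alphaK ω j : ℤ) - 1) * ω j)
    (hK1 : 1 ≤ K) (hdvd : ω (n + 1) ∣ K) :
    K = ω (n + 1) ∧ alphaK ω 1 = 2 ∧ ω 1 = ω 0 + 1 ∧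
      (∀ j, 2 ≤ j → j ≤ n → alphaK ω j = 1) ∧ ω 0 = 2 ∧ ω 1 = 3 := by
  have hpos := omega_pos n ω hω hprim
  obtain ⟨h0, hd, hlt⟩ := hω
  -- terms nonneg
  have hterm : ∀ j ∈ Finset.Icc 1 n, (0:ℤ) ≤ ((alphaK ω j : ℤ) - 1) * ω j := by
    intro j hj
    rw [Finset.mem_Icc] at hj
    have h1 : 1 ≤ alphaK ω j := alphaK_pos ω h0 hj.1
    have h2 : 0 < ω j := hpos j (by omega)
    have : (1:ℤ) ≤ (alphaK ω j : ℤ) := by exact_mod_cast h1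
    nlinarith
  have hsplit : Finset.Icc 1 n = insert 1 (Finset.Icc 2 n) := by
    ext x; simp only [Finset.mem_insert, Finset.mem_Icc]; omega
  have h1n : (1:ℕ) ∉ Finset.Icc 2 n := by simp
  have hsum : ∑ j ∈ Finset.Icc 1 n, ((alphaK ω j : ℤ) - 1) * ω j
      = ((alphaK ω 1 : ℤ) - 1) * ω 1 + ∑ j ∈ Finset.Icc 2 n, ((alphaK ω j : ℤ) - 1) * ω j := by
    rw [hsplit, Finset.sum_insert h1n]
  have hrest : (0:ℤ) ≤ ∑ j ∈ Finset.Icc 2 n, ((alphaK ω j : ℤ) - 1) * ω j :=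
    Finset.sum_nonneg (fun j hj => hterm j (by rw [Finset.mem_Icc] at hj ⊢; omega))
  have hω1 : 0 < ω 1 := hpos 1 (by omega)
  have ht1 : ω 1 ≤ ((alphaK ω 1 : ℤ) - 1) * ω 1 := by
    have : (2:ℤ) ≤ (alphaK ω 1 : ℤ) := by exact_mod_cast hα
    nlinarith
  have hsumge : ω 0 + 1 ≤ ∑ j ∈ Finset.Icc 1 n, ((alphaK ω j : ℤ) - 1) * ω j := by
    rw [hsum]; omega
  have hKle : K ≤ ω (n + 1) := by omega
  have hKge : ω (n + 1) ≤ K := Int.le_of_dvd (by omega) hdvd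
  have hKeq : K = ω (n + 1) := le_antisymm hKle hKge
  have hsumeq : ∑ j ∈ Finset.Icc 1 n, ((alphaK ω j : ℤ) - 1) * ω j = ω 0 + 1 := by omega
  rw [hsum] at hsumeq
  -- squeeze: t1 = ω 0 + 1 and rest = 0
  have ht1eq : ((alphaK ω 1 : ℤ) - 1) * ω 1 = ω 0 + 1 := by omega
  have hresteq : ∑ j ∈ Finset.Icc 2 n, ((alphaK ω j : ℤ) - 1) * ω j = 0 := by omega
  have hω1eq : ω 1 = ω 0 + 1 := by omega
  have hα1 : alphaK ω 1 = 2 := by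
    have : ((alphaK ω 1 : ℤ) - 1) * ω 1 = ω 1 := by omega
    have h2 : ((alphaK ω 1 : ℤ) - 2) * ω 1 = 0 := by ring_nf; ring_nf at this; omega
    have := mul_eq_zero.mp h2
    rcases this with h | h
    · have : (alphaK ω 1 : ℤ) = 2 := by omega
      exact_mod_cast this
    · omega
  have halljs : ∀ j, 2 ≤ j → j ≤ n → alphaK ω j = 1 := by
    intro j h2j hjn
    have := (Finset.sum_eq_zero_iff_of_nonneg
      (fun j hj => hterm j (by rw [Finset.mem_Icc] at hj ⊢; omega))).mp hresteq j
      (Finset.mem_Icc.mpr ⟨h2j, hjn⟩)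
    rcases mul_eq_zero.mp this with h | h
    · have h1 : 1 ≤ alphaK ω j := alphaK_pos ω h0 (by omega)
      have : (alphaK ω j : ℤ) = 1 := by omega
      exact_mod_cast this
    · have := hpos j (by omega); omega
  -- compute ω 0 = 2
  have hd1 : dks ω 1 = 1 := by
    have d0 : dks ω 1 ∣ (ω 0).natAbs := Finset.gcd_dvd (by simp)
    have d1 : dks ω 1 ∣ (ω 1).natAbs := Finset.gcd_dvd (by simp)
    have i0 : (dks ω 1 : ℤ) ∣ ω 0 := (Int.natAbs_dvd_natAbs.mp (by simpa using d0))
    have i1 : (dks ω 1 : ℤ) ∣ ω 1 := (Int.natAbs_dvd_natAbs.mp (by simpa using d1))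
    have : (dks ω 1 : ℤ) ∣ 1 := by
      have := dvd_sub i1 i0
      rwa [hω1eq, add_sub_cancel_left] at this
    have := Int.le_of_dvd one_pos this
    have hp := dks_pos ω h0 1
    omega
  have hd0 : dks ω 0 = (ω 0).natAbs := by simp [dks]
  have hω0 : ω 0 = 2 := by
    have : alphaK ω 1 = (ω 0).natAbs := by
      unfold alphaK
      rw [hd1, hd0]; simp
    rw [hα1] at this; omega
  exact ⟨hKeq, hα1, hω1eq, halljs, hω0, by omega⟩
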